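/- arXiv:1606.09547 — 5 statements merged into one kernel-verified Lean document; each statement's English description precedes it below -/
import Mathlib

section
/- Let a ∈ ℂ with a ≠ 0, let U ⊆ ℂ be open, and let f : ℕ → ℂ → ℂ be a family of infinitely differentiable functions on U satisfying the recurrences f₀'(w) = −f₁(w) and fᵥ'(w) = (f_{ν−1}(w) − f_{ν+1}(w))/2 for all ν ≥ 1 and all w ∈ U. For m ∈ ℕ let B_m ∈ Matrix (Fin m) (Fin m) ℂ be the tridiagonal matrix with zero diagonal, (B_m)_{0,1} = −1, and (B_m)_{i,i−1} = 1/2, (B_m)_{i,i+1} = −1/2 for 1 ≤ i ≤ m−1 (entries zero whenever |i−j| > 1). Then for every r ≥ 1, every k ∈ ℕ, every ν < r, and every z₀ ∈ ℂ with a·z ∈ U for all z in a neighborhood of z₀, the k-th derivative of z ↦ fᵥ(a·z) at z₀ equals a^k · Σ_{j=0}^{r+k−1} (B_{r+k}^k)_{ν,j} · f_j(a·z₀). -/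
open Matrix

/-- The tridiagonal matrix `B_m` of the Hankel-function derivative recursion:
zero diagonal, `(B_m)_{0,1} = -1`, `(B_m)_{i,i-1} = 1/2` and `(B_m)_{i,i+1} = -1/2`
for `i ≥ 1`, all other entries zero. -/
noncomputable def Bmat (m : ℕ) : Matrix (Fin m) (Fin m) ℂ :=
  fun i j =>
    if (j : ℕ) = (i : ℕ) + 1 then (if (i : ℕ) = 0 then -1 else -(1/2))
    else if (i : ℕ) = (j : ℕ) + 1 then 1/2
    else 0

/-- Infinite version of `Bmat`. -/
noncomputable def Binf (i j : ℕ) : ℂ :=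
  if j = i + 1 then (if i = 0 then -1 else -(1/2))
  else if i = j + 1 then 1/2
  else 0

lemma Binf_zero {i j : ℕ} (h : i + 1 < j) : Binf i j = 0 := by
  unfold Binf
  rw [if_neg (by omega), if_neg (by omega)]

/-- Powers of the infinite band matrix. -/
noncomputable def Cc : ℕ → ℕ → ℕ → ℂ
  | 0, ν, j => if ν = j then 1 else 0
  | (k+1), ν, j => ∑ l ∈ Finset.range (ν + k + 2), Cc k ν l * Binf l j

lemma Cc_support : ∀ (k ν j : ℕ), ν + k < j → Cc k ν j = 0 := by
  intro k
  induction k with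
  | zero => intro ν j h; simp only [Cc]; rw [if_neg (by omega)]
  | succ k ih =>
    intro ν j h
    simp only [Cc]
    apply Finset.sum_eq_zero
    intro l hl
    rcases le_or_gt l (ν + k) with hle | hlt
    · have : Binf l j = 0 := Binf_zero (by omega)
      simp [this]
    · have : Cc k ν l = 0 := ih ν l (by omega)
      simp [this]

lemma BmatPow : ∀ (k m : ℕ) (i j : Fin m), (i : ℕ) + k < m →
    ((Bmat m) ^ k) i j = Cc k i j := by
  intro k
  induction k with
  | zero =>
    intro m i j h
    rw [pow_zero]
    simp [Matrix.one_apply, Cc, Fin.ext_iff]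
  | succ k ih =>
    intro m i j h
    rw [pow_succ, Matrix.mul_apply]
    have hstep : ∀ l : Fin m, (Bmat m ^ k) i l * Bmat m l j = Cc k i l * Binf l j := by
      intro l
      rw [ih m i l (by omega)]
      rfl
    rw [Finset.sum_congr rfl (fun l _ => hstep l)]
    rw [Fin.sum_univ_eq_sum_range (fun l => Cc k (i : ℕ) l * Binf l (j : ℕ)) m]
    have hsub : Finset.range ((i : ℕ) + k + 2) ⊆ Finset.range m :=
      Finset.range_subset_range.2 (by omega)
    rw [← Finset.sum_subset hsub (fun l _ hl => by
      have : Cc k (i : ℕ) l = 0 := Cc_support k i l (by simp [Finset.mem_range] at hl; omega)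
      simp [this])]
    rfl

lemma row_formula (U : Set ℂ) (f : ℕ → ℂ → ℂ)
    (hrec0 : ∀ w ∈ U, deriv (f 0) w = -(f 1 w))
    (hrec : ∀ ν : ℕ, 1 ≤ ν → ∀ w ∈ U, deriv (f ν) w = (f (ν - 1) w - f (ν + 1) w) / 2) :
    ∀ (j : ℕ) (w : ℂ), w ∈ U →
      deriv (f j) w = ∑ l ∈ Finset.range (j + 2), Binf j l * f l w := by
  intro j w hw
  cases j with
  | zero =>
    rw [hrec0 w hw]
    simp [Finset.sum_range_succ, Binf]
  | succ n =>
    rw [hrec (n+1) (by omega) w hw]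
    rw [Finset.sum_range_succ, Finset.sum_range_succ, Finset.sum_range_succ]
    have h0 : ∑ l ∈ Finset.range n, Binf (n+1) l * f l w = 0 := by
      apply Finset.sum_eq_zero
      intro l hl
      simp only [Finset.mem_range] at hl
      unfold Binf
      rw [if_neg (by omega), if_neg (by omega)]
      ring
    rw [h0]
    have h1 : Binf (n+1) n = 1/2 := by unfold Binf; rw [if_neg (by omega), if_pos rfl]
    have h2 : Binf (n+1) (n+1) = 0 := by unfold Binf; rw [if_neg (by omega), if_neg (by omega)]
    have h3 : Binf (n+1) (n+2) = -(1/2) := by unfold Binf; rw [if_pos rfl, if_neg (by omega)]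
    rw [h1, h2, h3]
    simp only [Nat.add_sub_cancel]
    ring

lemma keyA (a : ℂ) (U : Set ℂ) (hU : IsOpen U)
    (f : ℕ → ℂ → ℂ) (hf : ∀ ν : ℕ, ContDiffOn ℂ ⊤ (f ν) U)
    (hrec0 : ∀ w ∈ U, deriv (f 0) w = -(f 1 w))
    (hrec : ∀ ν : ℕ, 1 ≤ ν → ∀ w ∈ U, deriv (f ν) w = (f (ν - 1) w - f (ν + 1) w) / 2)
    (k : ℕ) : ∀ (ν : ℕ) (z₀ : ℂ), a * z₀ ∈ U →
    iteratedDeriv k (fun z => f ν (a * z)) z₀ =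
      a ^ k * ∑ j ∈ Finset.range (ν + k + 1), Cc k ν j * f j (a * z₀) := by
  have hV : IsOpen {z : ℂ | a * z ∈ U} := hU.preimage (continuous_const.mul continuous_id)
  have hdiff : ∀ (j : ℕ) (w : ℂ), a * w ∈ U →
      HasDerivAt (fun z => f j (a * z)) (a * deriv (f j) (a * w)) w := by
    intro j w hw
    have h1 : HasDerivAt (fun z : ℂ => a * z) a w := by
      simpa using (hasDerivAt_id w).const_mul a
    have h2 : DifferentiableAt ℂ (f j) (a * w) :=
      ((hf j).differentiableOn (by simp)).differentiableAt (hU.mem_nhds hw)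
    have := h2.hasDerivAt.comp w h1
    simpa [Function.comp_def, mul_comm] using this
  induction k with
  | zero =>
    intro ν z₀ _
    rw [iteratedDeriv_zero, pow_zero, one_mul, Finset.sum_range_succ,
      Finset.sum_eq_zero (fun j hj => by
        simp only [Finset.mem_range] at hj
        simp only [Cc]; rw [if_neg (by omega)]; ring)]
    simp [Cc]
  | succ k ih =>
    intro ν z₀ hz₀
    rw [iteratedDeriv_succ]
    have heq : (fun z => a ^ k * ∑ j ∈ Finset.range (ν + k + 1), Cc k ν j * f j (a * z))
        =ᶠ[nhds z₀] iteratedDeriv k (fun z => f ν (a * z)) := by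
      filter_upwards [hV.mem_nhds hz₀] with z hz using (ih ν z hz).symm
    rw [← heq.deriv_eq]
    have hD : HasDerivAt
        (fun z => a ^ k * ∑ j ∈ Finset.range (ν + k + 1), Cc k ν j * f j (a * z))
        (a ^ k * ∑ j ∈ Finset.range (ν + k + 1), Cc k ν j * (a * deriv (f j) (a * z₀))) z₀ :=
      ((HasDerivAt.fun_sum fun j _ => (hdiff j z₀ hz₀).const_mul (Cc k ν j))).const_mul (a ^ k)
    rw [hD.deriv]
    -- rewrite deriv (f j) using the recursion
    have hrow := row_formula U f hrec0 hrec
    calc a ^ k * ∑ j ∈ Finset.range (ν + k + 1), Cc k ν j * (a * deriv (f j) (a * z₀))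
        = a ^ (k+1) * ∑ j ∈ Finset.range (ν + k + 1), Cc k ν j *
            (∑ l ∈ Finset.range (ν + k + 2), Binf j l * f l (a * z₀)) := by
          rw [Finset.mul_sum, Finset.mul_sum]
          apply Finset.sum_congr rfl
          intro j hj
          simp only [Finset.mem_range] at hj
          rw [hrow j (a * z₀) hz₀]
          have hsub : Finset.range (j + 2) ⊆ Finset.range (ν + k + 2) :=
            Finset.range_subset_range.2 (by omega)
          rw [← Finset.sum_subset hsub (fun l _ hl => by
            have : Binf j l = 0 := Binf_zero (by simp [Finset.mem_range] at hl; omega)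
            simp [this])]
          ring
      _ = a ^ (k+1) * ∑ l ∈ Finset.range (ν + k + 2),
            (∑ j ∈ Finset.range (ν + k + 1), Cc k ν j * Binf j l) * f l (a * z₀) := by
          congr 1
          simp only [Finset.mul_sum]
          rw [Finset.sum_comm]
          apply Finset.sum_congr rfl
          intro l _
          rw [Finset.sum_mul]
          apply Finset.sum_congr rfl
          intro j _
          ring
      _ = a ^ (k+1) * ∑ l ∈ Finset.range (ν + k + 2), Cc (k+1) ν l * f l (a * z₀) := by
          congr 1
          apply Finset.sum_congr rfl
          intro l _
          congr 1
          simp only [Cc]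
          conv_rhs => rw [Finset.sum_range_succ]
          rw [Cc_support k ν (ν + k + 1) (by omega)]
          simp
      _ = a ^ (k+1) * ∑ j ∈ Finset.range (ν + (k+1) + 1), Cc (k+1) ν j * f j (a * z₀) := rfl

theorem stmt0 (a : ℂ) (ha : a ≠ 0) (U : Set ℂ) (hU : IsOpen U)
    (f : ℕ → ℂ → ℂ) (hf : ∀ ν : ℕ, ContDiffOn ℂ ⊤ (f ν) U)
    (hrec0 : ∀ w ∈ U, deriv (f 0) w = -(f 1 w))
    (hrec : ∀ ν : ℕ, 1 ≤ ν → ∀ w ∈ U, deriv (f ν) w = (f (ν - 1) w - f (ν + 1) w) / 2)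
    (r : ℕ) (hr : 1 ≤ r) (k : ℕ) (ν : ℕ) (hν : ν < r) (z₀ : ℂ)
    (hz : ∀ᶠ z in nhds z₀, a * z ∈ U) :
    iteratedDeriv k (fun z => f ν (a * z)) z₀ =
      a ^ k * ∑ j : Fin (r + k),
        ((Bmat (r + k)) ^ k) ⟨ν, by omega⟩ j * f (j : ℕ) (a * z₀) := by
  have hz₀ : a * z₀ ∈ U := hz.self_of_nhds
  rw [keyA a U hU f hf hrec0 hrec k ν z₀ hz₀]
  congr 1
  have hconv : ∀ j : Fin (r + k),
      ((Bmat (r + k)) ^ k) ⟨ν, by omega⟩ j * f (j : ℕ) (a * z₀)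
        = Cc k ν (j : ℕ) * f (j : ℕ) (a * z₀) := by
    intro j
    rw [BmatPow k (r + k) ⟨ν, by omega⟩ j (by show ν + k < r + k; omega)]
  rw [Finset.sum_congr rfl (fun j _ => hconv j),
    Fin.sum_univ_eq_sum_range (fun j => Cc k ν j * f j (a * z₀)) (r + k)]
  apply Finset.sum_subset (Finset.range_subset_range.2 (by omega))
  intro l _ hl
  simp only [Finset.mem_range] at hl
  rw [Cc_support k ν l (by omega)]
  ring
end

section
/- Let n ∈ ℕ, μ ∈ ℂ, and let J_μ ∈ Matrix (Fin n) (Fin n) ℂ be the Jordan block with (J_μ)_{i j} = μ if j = i, 1 if j = i + 1, and 0 otherwise. Then for every polynomial p ∈ ℂ[X], the matrix p(J_μ) (the evaluation of p at J_μ via the polynomial functional calculus aeval) is upper-triangular Toeplitz with entries (p(J_μ))_{i j} = (d^{j−i}p/dX^{j−i})(μ) / (j−i)! for j ≥ i, and (p(J_μ))_{i j} = 0 for j < i. -/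
open Matrix Polynomial

/-- The Jordan block `J_μ` of size `n`: `μ` on the diagonal, `1` on the
superdiagonal, `0` elsewhere. -/
def JordanBlock (n : ℕ) (μ : ℂ) : Matrix (Fin n) (Fin n) ℂ :=
  fun i j => if j = i then μ else if (j : ℕ) = (i : ℕ) + 1 then 1 else 0

lemma iter_deriv_add (k : ℕ) (p q : ℂ[X]) :
    Polynomial.derivative^[k] (p + q) =
      Polynomial.derivative^[k] p + Polynomial.derivative^[k] q := by
  induction k generalizing p q with
  | zero => rfl
  | succ k ih => simp [Function.iterate_succ_apply, derivative_add, ih]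

lemma Jpow (n : ℕ) (μ : ℂ) (m : ℕ) (i j : Fin n) :
    (JordanBlock n μ ^ m) i j =
      if (i : ℕ) ≤ (j : ℕ) then
        (m.choose ((j : ℕ) - (i : ℕ)) : ℂ) * μ ^ (m - ((j : ℕ) - (i : ℕ)))
      else 0 := by
  induction m generalizing i j with
  | zero =>
    rw [pow_zero, Matrix.one_apply]
    split_ifs with h1 h2
    · subst h1; simp
    · exact absurd (le_of_eq (by rw [h1])) h2
    · have hne : (i : ℕ) ≠ (j : ℕ) := fun h => h1 (Fin.ext h)
      rw [Nat.choose_eq_zero_iff.2 (by omega), Nat.cast_zero, zero_mul]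
    · rfl
  | succ m ih =>
    rw [pow_succ, Matrix.mul_apply]
    have hsum : ∀ k : Fin n,
        (JordanBlock n μ ^ m) i k * JordanBlock n μ k j =
          (if k = j then (JordanBlock n μ ^ m) i j * μ else 0) +
            (if (k : ℕ) + 1 = (j : ℕ) then (JordanBlock n μ ^ m) i k else 0) := by
      intro k
      unfold JordanBlock
      rcases eq_or_ne k j with h | h
      · subst h; simp
      · have h1 : ¬ (j = k) := fun h' => h h'.symm
        simp only [if_neg h1, if_neg h, zero_add]
        by_cases h3 : (j : ℕ) = (k : ℕ) + 1
        · rw [if_pos h3, if_pos h3.symm, mul_one]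
        · rw [if_neg h3, if_neg (fun h' => h3 h'.symm), mul_zero]
    rw [Finset.sum_congr rfl (fun k _ => hsum k), Finset.sum_add_distrib,
      Finset.sum_ite_eq' Finset.univ j (fun _ => (JordanBlock n μ ^ m) i j * μ),
      if_pos (Finset.mem_univ j)]
    rcases Nat.eq_zero_or_pos (j : ℕ) with hj0 | hjpos
    · have h2 : (∑ k : Fin n, if (k : ℕ) + 1 = (j : ℕ) then (JordanBlock n μ ^ m) i k else 0)
          = 0 := Finset.sum_eq_zero fun k _ => if_neg (by omega)
      rw [h2, add_zero, ih]
      split_ifs with h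
      · have ha : (j : ℕ) - (i : ℕ) = 0 := by omega
        rw [ha]
        simp [pow_succ]
      · rw [zero_mul]
    · set k₀ : Fin n := ⟨(j : ℕ) - 1, by omega⟩ with hk₀
      have hk₀v : (k₀ : ℕ) = (j : ℕ) - 1 := rfl
      have h2 : (∑ k : Fin n, if (k : ℕ) + 1 = (j : ℕ) then (JordanBlock n μ ^ m) i k else 0)
          = (JordanBlock n μ ^ m) i k₀ := by
        rw [Finset.sum_eq_single k₀]
        · exact if_pos (by omega)
        · intro b _ hb
          exact if_neg (fun h => hb (Fin.ext (show (b : ℕ) = (j : ℕ) - 1 by omega)))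
        · intro h; exact absurd (Finset.mem_univ k₀) h
      rw [h2, ih, ih]
      by_cases hij : (i : ℕ) ≤ (j : ℕ)
      · simp only [if_pos hij]
        set a := (j : ℕ) - (i : ℕ) with ha
        rcases Nat.eq_zero_or_pos a with ha0 | hapos
        · rw [if_neg (show ¬ ((i : ℕ) ≤ (k₀ : ℕ)) by omega), add_zero, ha0]
          simp [pow_succ]
        · rw [if_pos (show (i : ℕ) ≤ (k₀ : ℕ) by omega),
            show (k₀ : ℕ) - (i : ℕ) = a - 1 by omega]
          have hpascal : (m + 1).choose a = m.choose (a - 1) + m.choose a := by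
            rw [show a = (a - 1) + 1 by omega, Nat.choose_succ_succ,
              show a - 1 + 1 - 1 = a - 1 by omega]
          rw [hpascal]
          rcases le_or_gt a m with ham | ham
          · rw [show m + 1 - a = m - a + 1 by omega, show m - (a - 1) = m - a + 1 by omega]
            push_cast
            ring
          · rcases le_or_gt a (m + 1) with ham2 | ham2
            · have haeq : a = m + 1 := by omega
              rw [haeq, show m + 1 - 1 = m by omega, Nat.choose_self,
                Nat.choose_eq_zero_of_lt (by omega), show m - m = 0 by omega,
                show m + 1 - (m + 1) = 0 by omega]
              push_cast; ring
            · rw [Nat.choose_eq_zero_of_lt (by omega), Nat.choose_eq_zero_of_lt (by omega)]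
              norm_num
      · rw [if_neg hij, if_neg hij, if_neg (show ¬ ((i : ℕ) ≤ (k₀ : ℕ)) by omega),
          add_zero, zero_mul]

/-- A polynomial evaluated at a Jordan block is the upper-triangular Toeplitz
matrix of scaled derivatives: `(p(J_μ))_{ij} = p^{(j-i)}(μ)/(j-i)!` for `j ≥ i`,
and `0` for `j < i`. -/
theorem stmt3 (n : ℕ) (μ : ℂ) (p : ℂ[X]) (i j : Fin n) :
    (Polynomial.aeval (JordanBlock n μ) p) i j =
      if (i : ℕ) ≤ (j : ℕ) then
        ((Polynomial.derivative^[(j : ℕ) - (i : ℕ)] p).eval μ) /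
          (((j : ℕ) - (i : ℕ)).factorial : ℂ)
      else 0 := by
  induction p using Polynomial.induction_on' with
  | add p q hp hq =>
    rw [map_add, Matrix.add_apply, hp, hq, iter_deriv_add]
    split_ifs
    · rw [eval_add, add_div]
    · rw [add_zero]
  | monomial m a =>
    set k := (j : ℕ) - (i : ℕ) with hk
    have hm : (Polynomial.aeval (JordanBlock n μ)) ((monomial m) a) i j
        = a * (JordanBlock n μ ^ m) i j := by
      rw [aeval_monomial, Algebra.algebraMap_eq_smul_one, smul_mul_assoc, one_mul,
        Matrix.smul_apply, smul_eq_mul]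
    rw [hm, Jpow]
    have hd : Polynomial.derivative^[k] ((monomial m) a)
        = C a * (C (m.descFactorial k : ℂ) * X ^ (m - k)) := by
      rw [← C_mul_X_pow_eq_monomial, Polynomial.iterate_derivative_C_mul,
        Polynomial.iterate_derivative_X_pow_eq_C_mul]
    split_ifs with h
    · rw [hd, eval_mul, eval_C, eval_mul, eval_C, eval_pow, eval_X,
        Nat.descFactorial_eq_factorial_mul_choose]
      have hf : ((k.factorial : ℂ)) ≠ 0 := Nat.cast_ne_zero.mpr k.factorial_ne_zero
      field_simp
      rw [← hk]
      push_cast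
      ring
    · rw [mul_zero]
end

section
/- Let μ ∈ ℂ, n ∈ ℕ, and for f : ℂ → ℂ define the lower-triangular Toeplitz matrix T_n(f) ∈ Matrix (Fin n) (Fin n) ℂ by (T_n(f))_{i j} = (iteratedDeriv (i−j) f μ)/(i−j)! when i ≥ j and 0 when i < j. If h is analytic at μ and h(μ) ≠ 0, then T_n(h) is invertible and T_n(h) · T_n(fun z => (h z)⁻¹) = 1; in particular (T_n(h))⁻¹ = T_n(fun z => (h z)⁻¹). -/
/-- The lower-triangular Toeplitz matrix of scaled derivatives of `f` at `μ`:
`(T_n(f))_{ij} = f^{(i-j)}(μ)/(i-j)!` for `i ≥ j` and `0` otherwise. -/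
noncomputable def Toep (μ : ℂ) (n : ℕ) (f : ℂ → ℂ) : Matrix (Fin n) (Fin n) ℂ :=
  fun i j =>
    if (j : ℕ) ≤ (i : ℕ) then
      iteratedDeriv ((i : ℕ) - (j : ℕ)) f μ / (((i : ℕ) - (j : ℕ)).factorial : ℂ)
    else 0

open Finset Topology

private lemma AnalyticAt.derivAux {f : ℂ → ℂ} {x : ℂ} (hf : AnalyticAt ℂ f x) :
    AnalyticAt ℂ (deriv f) x := by
  obtain ⟨s, hs, hso, hxs⟩ := eventually_nhds_iff.mp hf.eventually_analyticAt
  exact (AnalyticOnNhd.deriv (fun y hy => hs y hy)) x hxs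

private lemma itd_add : ∀ (n : ℕ) (f g : ℂ → ℂ) (x : ℂ),
    AnalyticAt ℂ f x → AnalyticAt ℂ g x →
    iteratedDeriv n (fun z => f z + g z) x = iteratedDeriv n f x + iteratedDeriv n g x := by
  intro n
  induction n with
  | zero => intro f g x _ _; simp
  | succ n ih =>
    intro f g x hf hg
    rw [iteratedDeriv_succ', iteratedDeriv_succ', iteratedDeriv_succ']
    have he : deriv (fun z => f z + g z) =ᶠ[𝓝 x] fun z => deriv f z + deriv g z := by
      filter_upwards [hf.eventually_analyticAt, hg.eventually_analyticAt] with y hfy hgy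
      exact deriv_add hfy.differentiableAt hgy.differentiableAt
    rw [he.iteratedDeriv_eq n, ih _ _ x hf.derivAux hg.derivAux]

private lemma pascal_sum (a b : ℕ → ℂ) (n : ℕ) :
    ∑ k ∈ range (n+1), (n.choose k : ℂ) * a (k+1) * b (n-k)
      + ∑ k ∈ range (n+1), (n.choose k : ℂ) * a k * b (n+1-k)
    = ∑ k ∈ range (n+2), ((n+1).choose k : ℂ) * a k * b (n+1-k) := by
  rw [Finset.sum_range_succ' (fun k => ((n+1).choose k : ℂ) * a k * b (n+1-k)) (n+1),
      Finset.sum_range_succ' (fun k => ((n).choose k : ℂ) * a k * b (n+1-k)) n]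
  simp only [Nat.choose_succ_succ, Nat.cast_add, Nat.choose_zero_right, Nat.cast_one,
    Nat.succ_sub_succ_eq_sub, Nat.sub_zero, add_mul, Finset.sum_add_distrib]
  rw [Finset.sum_range_succ (fun k => ((n.choose (k+1) : ℂ)) * a (k+1) * b (n-k)) n]
  simp [Nat.choose_succ_self]
  ring

/-- The Leibniz rule for iterated derivatives of analytic functions. -/
private lemma leibniz : ∀ (n : ℕ) (f g : ℂ → ℂ) (x : ℂ),
    AnalyticAt ℂ f x → AnalyticAt ℂ g x →
    iteratedDeriv n (fun z => f z * g z) x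
      = ∑ k ∈ Finset.range (n + 1),
          (n.choose k : ℂ) * iteratedDeriv k f x * iteratedDeriv (n - k) g x := by
  intro n
  induction n with
  | zero => intro f g x _ _; simp
  | succ n ih =>
    intro f g x hf hg
    rw [iteratedDeriv_succ']
    have he : deriv (fun z => f z * g z) =ᶠ[𝓝 x]
        fun z => deriv f z * g z + f z * deriv g z := by
      filter_upwards [hf.eventually_analyticAt, hg.eventually_analyticAt] with y hfy hgy
      exact deriv_mul hfy.differentiableAt hgy.differentiableAt
    rw [he.iteratedDeriv_eq n,
      itd_add n (fun z => deriv f z * g z) (fun z => f z * deriv g z) x (hf.derivAux.mul hg) (hf.mul hg.derivAux),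
      ih _ _ x hf.derivAux hg, ih _ _ x hf hg.derivAux]
    have key : ∀ k, iteratedDeriv k (deriv f) x = iteratedDeriv (k + 1) f x := by
      intro k; rw [iteratedDeriv_succ']
    have key' : ∀ k, iteratedDeriv k (deriv g) x = iteratedDeriv (k + 1) g x := by
      intro k; rw [iteratedDeriv_succ']
    simp only [key, key']
    have e1 : ∀ k ∈ range (n+1),
        (n.choose k : ℂ) * iteratedDeriv k f x * iteratedDeriv (n - k + 1) g x
          = (n.choose k : ℂ) * iteratedDeriv k f x * iteratedDeriv (n + 1 - k) g x := by
      intro k hk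
      rw [Nat.succ_sub (Finset.mem_range_succ_iff.mp hk)]
    rw [Finset.sum_congr rfl e1]
    exact pascal_sum (fun k => iteratedDeriv k f x) (fun k => iteratedDeriv k g x) n

/-- The Cauchy-product (convolution) form of the Leibniz rule, with factorials. -/
private lemma conv_sum (N : ℕ) (f g : ℂ → ℂ) (x : ℂ)
    (hf : AnalyticAt ℂ f x) (hg : AnalyticAt ℂ g x) :
    ∑ m ∈ range (N + 1),
        (iteratedDeriv (N - m) f x / ((N - m).factorial : ℂ))
          * (iteratedDeriv m g x / (m.factorial : ℂ))
      = iteratedDeriv N (fun z => f z * g z) x / (N.factorial : ℂ) := by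
  rw [leibniz N f g x hf hg, ← Finset.sum_range_reflect
    (fun k => (N.choose k : ℂ) * iteratedDeriv k f x * iteratedDeriv (N - k) g x) (N+1),
    Finset.sum_div]
  refine Finset.sum_congr rfl fun m hm => ?_
  have hm' : m ≤ N := Finset.mem_range_succ_iff.mp hm
  rw [show N + 1 - 1 - m = N - m from rfl]
  rw [Nat.choose_symm hm', Nat.sub_sub_self hm']
  have hfac := Nat.choose_mul_factorial_mul_factorial hm'
  have h1 : ((N - m).factorial : ℂ) ≠ 0 := Nat.cast_ne_zero.mpr (Nat.factorial_ne_zero _)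
  have h2 : ((m).factorial : ℂ) ≠ 0 := Nat.cast_ne_zero.mpr (Nat.factorial_ne_zero _)
  have h3 : ((N).factorial : ℂ) ≠ 0 := Nat.cast_ne_zero.mpr (Nat.factorial_ne_zero _)
  have hc : (N.choose m : ℂ) * (m.factorial : ℂ) * ((N - m).factorial : ℂ)
      = (N.factorial : ℂ) := by exact_mod_cast congrArg (Nat.cast : ℕ → ℂ) hfac
  field_simp
  rw [← hc]
  ring

private lemma itd_one (N : ℕ) (μ : ℂ) :
    iteratedDeriv N (fun _ : ℂ => (1:ℂ)) μ = if N = 0 then 1 else 0 := by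
  cases N with
  | zero => simp
  | succ m =>
    have hd : deriv (fun _ : ℂ => (1:ℂ)) = fun _ => (0:ℂ) := by funext x; simp
    rw [iteratedDeriv_succ', hd]
    have h0 : iteratedDeriv m (fun _ : ℂ => (0:ℂ)) μ = 0 := by
      rw [iteratedDeriv_eq_iterate,
        Function.iterate_fixed (by funext x; simp : deriv (fun _ : ℂ => (0:ℂ)) = fun _ => 0) m]
    simp [h0]

/-- If `h` is analytic at `μ` with `h μ ≠ 0`, then `T_n(h)` is invertible, its
product with the Toeplitz matrix of the reciprocal is the identity, and its
inverse is the Toeplitz matrix of the reciprocal. -/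
theorem stmt6 (μ : ℂ) (n : ℕ) (h : ℂ → ℂ)
    (hh : AnalyticAt ℂ h μ) (h0 : h μ ≠ 0) :
    IsUnit (Toep μ n h) ∧
      Toep μ n h * Toep μ n (fun z => (h z)⁻¹) = 1 ∧
      (Toep μ n h)⁻¹ = Toep μ n (fun z => (h z)⁻¹) := by
  set g : ℂ → ℂ := fun z => (h z)⁻¹ with hgdef
  have hg : AnalyticAt ℂ g μ := hh.inv h0
  have hone : (fun z => h z * g z) =ᶠ[𝓝 μ] fun _ => (1 : ℂ) := by
    filter_upwards [hh.continuousAt.eventually_ne h0] with z hz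
    simp [hgdef, mul_inv_cancel₀ hz]
  have key : Toep μ n h * Toep μ n g = 1 := by
    ext i j
    rw [Matrix.mul_apply]
    by_cases hij : (j : ℕ) ≤ (i : ℕ)
    · set N := (i : ℕ) - (j : ℕ) with hN
      set F : ℕ → ℂ := fun k => if (j : ℕ) ≤ k ∧ k ≤ (i : ℕ) then
          (iteratedDeriv ((i : ℕ) - k) h μ / (((i : ℕ) - k).factorial : ℂ))
            * (iteratedDeriv (k - (j : ℕ)) g μ / ((k - (j : ℕ)).factorial : ℂ))
        else 0 with hFdef
      have hsum : ∑ k : Fin n, Toep μ n h i k * Toep μ n g k j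
          = ∑ m ∈ range (N + 1),
              (iteratedDeriv (N - m) h μ / ((N - m).factorial : ℂ))
                * (iteratedDeriv m g μ / (m.factorial : ℂ)) := by
        have hF : ∀ k : Fin n, Toep μ n h i k * Toep μ n g k j = F (k : ℕ) := by
          intro k
          simp only [Toep, hFdef]
          by_cases h1 : (k : ℕ) ≤ (i : ℕ) <;> by_cases h2 : (j : ℕ) ≤ (k : ℕ) <;>
            simp [h1, h2]
        rw [Finset.sum_congr rfl (fun k _ => hF k), Fin.sum_univ_eq_sum_range F n]
        have step1 : ∑ k ∈ range n, F k = ∑ k ∈ Finset.Ico (j : ℕ) ((i : ℕ) + 1), F k := by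
          refine (Finset.sum_subset ?_ ?_).symm
          · intro k hk
            rw [Finset.mem_Ico] at hk
            exact Finset.mem_range.mpr (lt_of_lt_of_le hk.2 i.isLt)
          · intro k _ hk
            rw [Finset.mem_Ico] at hk
            rw [hFdef]
            simp only
            rw [if_neg (by omega)]
        rw [step1, Finset.sum_Ico_eq_sum_range]
        have hNN : (i : ℕ) + 1 - (j : ℕ) = N + 1 := by rw [hN]; omega
        rw [hNN]
        refine Finset.sum_congr rfl fun m hm => ?_
        have hm' : m ≤ N := Finset.mem_range_succ_iff.mp hm
        rw [hFdef]
        simp only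
        rw [if_pos (by constructor <;> omega)]
        have e1 : (i : ℕ) - ((j : ℕ) + m) = N - m := by omega
        have e2 : (j : ℕ) + m - (j : ℕ) = m := by omega
        rw [e1, e2]
      rw [hsum, conv_sum N h g μ hh hg, hone.iteratedDeriv_eq N, itd_one]
      rcases eq_or_ne i j with rfl | hne
      · have : N = 0 := by rw [hN]; omega
        simp [this, Matrix.one_apply]
      · have hv : (i : ℕ) ≠ (j : ℕ) := fun e => hne (Fin.ext e)
        have : N ≠ 0 := by rw [hN]; omega
        rw [if_neg this, zero_div, Matrix.one_apply_ne hne]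
    · have hz : ∀ k : Fin n, Toep μ n h i k * Toep μ n g k j = 0 := by
        intro k
        simp only [Toep]
        by_cases h1 : (k : ℕ) ≤ (i : ℕ) <;> by_cases h2 : (j : ℕ) ≤ (k : ℕ) <;>
          first | (exfalso; omega) | simp [h1, h2]
      rw [Finset.sum_eq_zero fun k _ => hz k, Matrix.one_apply_ne (by
        rintro rfl; exact hij le_rfl)]
  refine ⟨(Matrix.isUnit_iff_isUnit_det _).mpr (Matrix.isUnit_det_of_right_inverse key), key, Matrix.inv_eq_right_inv key⟩
end

section
/- Let μ ∈ ℂ, n ∈ ℕ, and for f : ℂ → ℂ define the lower-triangular Toeplitz matrix T_n(f) ∈ Matrix (Fin n) (Fin n) ℂ by (T_n(f))_{i j} = (iteratedDeriv (i−j) f μ)/(i−j)! when i ≥ j and 0 when i < j. Let h₁ and h₂ be analytic at μ with h₂(μ) ≠ 0, let p ∈ ℂ[X] be a polynomial, and define g : ℂ → ℂ by g(λ) = h₁(λ) · p(λ) / h₂(λ). Then for every i < n, (iteratedDeriv i g μ)/i! equals the (i, 0) entry of the matrix T_n(h₁) · (T_n(h₂))⁻¹ · T_n(fun z => p(z)).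 -/
open Polynomial

section Aux

open Finset

/-- Iterated derivatives of a function analytic on a neighborhood of each point of `s`
are analytic there. -/
lemma analyticOnNhd_iteratedDeriv {f : ℂ → ℂ} {s : Set ℂ}
    (hf : AnalyticOnNhd ℂ f s) (m : ℕ) : AnalyticOnNhd ℂ (iteratedDeriv m f) s := by
  induction m with
  | zero => simpa [iteratedDeriv_zero] using hf
  | succ m ih => rw [iteratedDeriv_succ]; exact ih.deriv

/-- The general Leibniz rule for iterated derivatives of a product of functions
analytic on an open set. -/
lemma leibniz_on {f g : ℂ → ℂ} {s : Set ℂ} (hs : IsOpen s)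
    (hf : AnalyticOnNhd ℂ f s) (hg : AnalyticOnNhd ℂ g s) (k : ℕ) :
    ∀ x ∈ s, iteratedDeriv k (fun z => f z * g z) x =
      ∑ m ∈ range (k + 1),
        (k.choose m : ℂ) * iteratedDeriv m f x * iteratedDeriv (k - m) g x := by
  induction k with
  | zero => intro x hx; simp
  | succ k ih =>
    intro x hx
    have hdf : ∀ m : ℕ, DifferentiableAt ℂ (iteratedDeriv m f) x :=
      fun m => ((analyticOnNhd_iteratedDeriv hf m) x hx).differentiableAt
    have hdg : ∀ m : ℕ, DifferentiableAt ℂ (iteratedDeriv m g) x :=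
      fun m => ((analyticOnNhd_iteratedDeriv hg m) x hx).differentiableAt
    have hev : iteratedDeriv k (fun z => f z * g z) =ᶠ[nhds x]
        fun y => ∑ m ∈ range (k + 1),
          (k.choose m : ℂ) * iteratedDeriv m f y * iteratedDeriv (k - m) g y :=
      Filter.eventually_of_mem (hs.mem_nhds hx) ih
    rw [iteratedDeriv_succ, hev.deriv_eq]
    have hterm : ∀ m ∈ range (k + 1), DifferentiableAt ℂ
        (fun y => (k.choose m : ℂ) * iteratedDeriv m f y * iteratedDeriv (k - m) g y) x := by
      intro m _
      exact (((hdf m).const_mul _).mul (hdg (k - m)))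
    rw [deriv_fun_sum hterm]
    have hder : ∀ m ∈ range (k + 1),
        deriv (fun y => (k.choose m : ℂ) * iteratedDeriv m f y * iteratedDeriv (k - m) g y) x =
          (k.choose m : ℂ) * (iteratedDeriv (m + 1) f x * iteratedDeriv (k - m) g x
            + iteratedDeriv m f x * iteratedDeriv (k - m + 1) g x) := by
      intro m _
      have : (fun y => (k.choose m : ℂ) * iteratedDeriv m f y * iteratedDeriv (k - m) g y)
          = fun y => (k.choose m : ℂ) * (iteratedDeriv m f y * iteratedDeriv (k - m) g y) := by
        funext y; ring
      rw [this, deriv_const_mul (d := fun y => iteratedDeriv m f y * iteratedDeriv (k - m) g y)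
          _ ((hdf m).mul (hdg (k - m))),
        deriv_fun_mul (hdf m) (hdg (k - m)), ← iteratedDeriv_succ, ← iteratedDeriv_succ]
    rw [Finset.sum_congr rfl hder]
    have key := Finset.sum_choose_succ_mul
      (fun a b => iteratedDeriv a f x * iteratedDeriv b g x) k
    simp only [mul_assoc]
    have h22 : k + 1 + 1 = k + 2 := rfl
    rw [h22, key, ← Finset.sum_add_distrib]
    apply Finset.sum_congr rfl
    intro m hm
    have hmk : m ≤ k := by simpa [Nat.lt_succ_iff] using hm
    have h1 : k + 1 - m = k - m + 1 := by omega
    rw [h1]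
    ring

/-- Scaled Taylor coefficient. -/
noncomputable def tc (μ : ℂ) (f : ℂ → ℂ) (m : ℕ) : ℂ :=
  iteratedDeriv m f μ / (m.factorial : ℂ)

/-- The scaled Taylor coefficients of a product are the convolution of the coefficients. -/
lemma tc_mul {f g : ℂ → ℂ} {μ : ℂ} (hf : AnalyticAt ℂ f μ) (hg : AnalyticAt ℂ g μ) (k : ℕ) :
    tc μ (fun z => f z * g z) k = ∑ m ∈ range (k + 1), tc μ f m * tc μ g (k - m) := by
  obtain ⟨t, ht, hfg⟩ := (hf.eventually_analyticAt.and hg.eventually_analyticAt).exists_mem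
  obtain ⟨s, hst, hs, hxs⟩ := mem_nhds_iff.mp ht
  have hfs : AnalyticOnNhd ℂ f s := fun y hy => (hfg y (hst hy)).1
  have hgs : AnalyticOnNhd ℂ g s := fun y hy => (hfg y (hst hy)).2
  have hl := leibniz_on hs hfs hgs k μ hxs
  unfold tc
  rw [hl, Finset.sum_div]
  apply Finset.sum_congr rfl
  intro m hm
  have hmk : m ≤ k := by simpa [Nat.lt_succ_iff] using hm
  rw [Nat.cast_choose ℂ hmk]
  have h1 : (m.factorial : ℂ) ≠ 0 := Nat.cast_ne_zero.mpr m.factorial_ne_zero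
  have h2 : ((k - m).factorial : ℂ) ≠ 0 := Nat.cast_ne_zero.mpr (k - m).factorial_ne_zero
  have h3 : (k.factorial : ℂ) ≠ 0 := Nat.cast_ne_zero.mpr k.factorial_ne_zero
  field_simp

end Aux

section ToepAux

open Finset

lemma Toep_eq_tc (μ : ℂ) (n : ℕ) (f : ℂ → ℂ) (i j : Fin n) :
    Toep μ n f i j = if (j : ℕ) ≤ (i : ℕ) then tc μ f ((i : ℕ) - (j : ℕ)) else 0 := rfl

/-- The product of two Toeplitz matrices of analytic functions is the Toeplitz matrix
of the product. -/
lemma Toep_mul {μ : ℂ} {n : ℕ} {f g : ℂ → ℂ}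
    (hf : AnalyticAt ℂ f μ) (hg : AnalyticAt ℂ g μ) :
    Toep μ n f * Toep μ n g = Toep μ n (fun z => f z * g z) := by
  ext i j
  rw [Matrix.mul_apply]
  by_cases hij : (j : ℕ) ≤ (i : ℕ)
  · have hsum : ∀ l : Fin n, Toep μ n f i l * Toep μ n g l j =
        if (j : ℕ) ≤ (l : ℕ) ∧ (l : ℕ) ≤ (i : ℕ) then
          tc μ f ((i : ℕ) - (l : ℕ)) * tc μ g ((l : ℕ) - (j : ℕ)) else 0 := by
      intro l
      simp only [Toep_eq_tc]
      by_cases h1 : (l : ℕ) ≤ (i : ℕ) <;> by_cases h2 : (j : ℕ) ≤ (l : ℕ) <;>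
        simp [h1, h2]
    rw [Finset.sum_congr rfl (fun l _ => hsum l)]
    have hre : (∑ l : Fin n, if (j : ℕ) ≤ (l : ℕ) ∧ (l : ℕ) ≤ (i : ℕ) then
        tc μ f ((i : ℕ) - (l : ℕ)) * tc μ g ((l : ℕ) - (j : ℕ)) else 0)
        = ∑ l ∈ range n, if (j : ℕ) ≤ l ∧ l ≤ (i : ℕ) then
          tc μ f ((i : ℕ) - l) * tc μ g (l - (j : ℕ)) else 0 := by
      rw [Fin.sum_univ_eq_sum_range (fun l => if (j : ℕ) ≤ l ∧ l ≤ (i : ℕ) then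
          tc μ f ((i : ℕ) - l) * tc μ g (l - (j : ℕ)) else 0) n]
    rw [hre]
    rw [← Finset.sum_filter]
    have hfil : (range n).filter (fun l => (j : ℕ) ≤ l ∧ l ≤ (i : ℕ))
        = Finset.Icc (j : ℕ) (i : ℕ) := by
      ext l
      simp only [Finset.mem_filter, Finset.mem_range, Finset.mem_Icc]
      constructor
      · rintro ⟨_, h⟩; exact h
      · rintro ⟨h1, h2⟩; exact ⟨lt_of_le_of_lt h2 i.isLt, h1, h2⟩
    rw [hfil, ← Finset.Ico_add_one_right_eq_Icc, Finset.sum_Ico_eq_sum_range]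
    have hlen : (i : ℕ) + 1 - (j : ℕ) = ((i : ℕ) - (j : ℕ)) + 1 := by omega
    rw [hlen]
    rw [Toep_eq_tc, if_pos hij, tc_mul hf hg]
    rw [← Finset.sum_range_reflect]
    apply Finset.sum_congr rfl
    intro m hm
    have hmle : m ≤ (i : ℕ) - (j : ℕ) := by
      simpa [Nat.lt_succ_iff] using hm
    have e1 : (i : ℕ) - ((j : ℕ) + ((i : ℕ) - (j : ℕ) - m)) = m := by omega
    have e2 : (j : ℕ) + ((i : ℕ) - (j : ℕ) - m) - (j : ℕ) = (i : ℕ) - (j : ℕ) - m := by omega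
    simp only [Nat.add_sub_cancel]
    rw [e1, e2]
  · have hz : ∀ l : Fin n, Toep μ n f i l * Toep μ n g l j = 0 := by
      intro l
      simp only [Toep_eq_tc]
      by_cases h1 : (l : ℕ) ≤ (i : ℕ) <;> by_cases h2 : (j : ℕ) ≤ (l : ℕ) <;>
        first
          | (exfalso; omega)
          | simp [h1, h2]
    rw [Finset.sum_congr rfl (fun l _ => hz l), Finset.sum_const_zero,
      Toep_eq_tc, if_neg hij]

/-- A Toeplitz matrix only depends on the germ of the function. -/
lemma Toep_congr {μ : ℂ} {n : ℕ} {f g : ℂ → ℂ} (h : f =ᶠ[nhds μ] g) :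
    Toep μ n f = Toep μ n g := by
  ext i j
  simp only [Toep]
  rw [h.iteratedDeriv_eq]

/-- The Toeplitz matrix of a function nonvanishing at `μ` is invertible. -/
lemma Toep_isUnit_det {μ : ℂ} {n : ℕ} {f : ℂ → ℂ} (h : f μ ≠ 0) :
    IsUnit (Toep μ n f).det := by
  have htri : (Toep μ n f).BlockTriangular OrderDual.toDual := by
    intro i j hij
    have : ¬ ((j : ℕ) ≤ (i : ℕ)) := by
      simp only [OrderDual.toDual_lt_toDual] at hij
      exact not_le.mpr (by exact_mod_cast hij)
    simp [Toep, this]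
  rw [Matrix.det_of_lowerTriangular _ htri]
  have hdiag : ∀ i : Fin n, Toep μ n f i i = f μ := by
    intro i
    simp [Toep]
  rw [Finset.prod_congr rfl (fun i _ => hdiag i), Finset.prod_const]
  exact (IsUnit.mk0 _ h).pow _

end ToepAux

/-- The scaled derivatives of `g = h₁ ⬝ p / h₂` at `μ` are the entries of the
first column of `T_n(h₁) ⬝ (T_n(h₂))⁻¹ ⬝ T_n(p)`. -/
theorem stmt7 (μ : ℂ) (n : ℕ) (h₁ h₂ : ℂ → ℂ)
    (hh₁ : AnalyticAt ℂ h₁ μ) (hh₂ : AnalyticAt ℂ h₂ μ) (h0 : h₂ μ ≠ 0)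
    (p : ℂ[X]) (g : ℂ → ℂ) (hg : ∀ l : ℂ, g l = h₁ l * p.eval l / h₂ l)
    (i : ℕ) (hi : i < n) :
    iteratedDeriv i g μ / (i.factorial : ℂ) =
      (Toep μ n h₁ * (Toep μ n h₂)⁻¹ * Toep μ n (fun z => p.eval z))
        ⟨i, hi⟩ ⟨0, by omega⟩ := by
  have hgfun : g = fun l => h₁ l * p.eval l / h₂ l := funext hg
  have hq : AnalyticAt ℂ (fun z => p.eval z) μ := by
    have := AnalyticAt.aeval_polynomial (analyticAt_id (𝕜 := ℂ) (z := μ)) p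
    simpa [Polynomial.aeval_def, Polynomial.eval₂_eq_eval_map] using this
  have hganl : AnalyticAt ℂ g μ := by
    rw [hgfun]
    exact (hh₁.mul hq).div hh₂ h0
  -- eventual identity g * h₂ = h₁ * p
  have hne : ∀ᶠ z in nhds μ, h₂ z ≠ 0 := hh₂.continuousAt.eventually_ne h0
  have hev : (fun z => g z * h₂ z) =ᶠ[nhds μ] (fun z => h₁ z * p.eval z) := by
    filter_upwards [hne] with z hz
    rw [hg z, div_mul_cancel₀ _ hz]
  set B := Toep μ n h₂ with hB
  have hBdet : IsUnit B.det := Toep_isUnit_det h0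
  have key : Toep μ n g * B = Toep μ n h₁ * Toep μ n (fun z => p.eval z) := by
    rw [Toep_mul hganl hh₂, Toep_mul hh₁ hq, Toep_congr hev]
  -- B commutes with Toep q
  have hcomm : Toep μ n (fun z => p.eval z) * B⁻¹ = B⁻¹ * Toep μ n (fun z => p.eval z) := by
    have hc : B * Toep μ n (fun z => p.eval z) = Toep μ n (fun z => p.eval z) * B := by
      rw [Toep_mul hh₂ hq, Toep_mul hq hh₂]
      have hcm : (fun z => h₂ z * p.eval z) = fun z => p.eval z * h₂ z := by
        funext z; ring
      rw [hcm]
    have h1 : B⁻¹ * (B * Toep μ n (fun z => p.eval z)) * B⁻¹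
        = Toep μ n (fun z => p.eval z) * B⁻¹ := by
      rw [← Matrix.mul_assoc, Matrix.nonsing_inv_mul _ hBdet, Matrix.one_mul]
    have h2 : B⁻¹ * (Toep μ n (fun z => p.eval z) * B) * B⁻¹
        = B⁻¹ * Toep μ n (fun z => p.eval z) := by
      rw [Matrix.mul_assoc B⁻¹ _ B⁻¹, Matrix.mul_assoc _ B B⁻¹,
        Matrix.mul_nonsing_inv _ hBdet, Matrix.mul_one]
    rw [← h1, hc, h2]
  have main : Toep μ n h₁ * B⁻¹ * Toep μ n (fun z => p.eval z) = Toep μ n g := by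
    calc Toep μ n h₁ * B⁻¹ * Toep μ n (fun z => p.eval z)
        = Toep μ n h₁ * (B⁻¹ * Toep μ n (fun z => p.eval z)) := by
          rw [Matrix.mul_assoc]
      _ = Toep μ n h₁ * (Toep μ n (fun z => p.eval z) * B⁻¹) := by rw [hcomm]
      _ = (Toep μ n h₁ * Toep μ n (fun z => p.eval z)) * B⁻¹ := by
          rw [Matrix.mul_assoc]
      _ = (Toep μ n g * B) * B⁻¹ := by rw [key]
      _ = Toep μ n g := by
          rw [Matrix.mul_assoc, Matrix.mul_nonsing_inv _ hBdet, Matrix.mul_one]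
  rw [main]
  simp [Toep]
end

section
/- Let E be an infinite-dimensional complex Banach space, z ∈ ℂ, r > 0, s ≥ 1 a natural number, and let F : ℕ → (E →L[ℂ] E) be a sequence of bounded linear operators (with F n representing the Laurent coefficient of index n − s). Suppose that for every λ with 0 < |λ − z| < r, the series Σ_{n : ℕ} (λ − z)^{(n : ℤ) − s} • (F n) converges in operator norm to an operator 𝓕(λ), and that the power series Σ_n (λ − z)^n • F n converges on the disk |λ − z| < r. Define T̃(λ) = (λ − z)^s • (id − 𝓕(λ)) for λ ≠ z. Then there exists a function G analytic on the ball {λ : |λ − z| < r} with values in E →L[ℂ] E such that G(λ) = T̃(λ) for all 0 < |λ − z| < r and G(z) = −(F 0), i.e. the analytic extension of T̃ at z equals minus the most singular Laurent coefficient F_{−s}. Moreover, if the range of F 0 is finite-dimensional, then the kernel of G(z) is infinite-dimensional. -/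
open Metric

/-- Pole cancellation for a finitely meromorphic operator-valued function: if
`𝓕(λ) = Σ_{n : ℕ} (λ - z)^{n - s} • F n` on the punctured disk, then
`T̃(λ) = (λ - z)^s • (I - 𝓕(λ))` extends holomorphically to the disk with value
`-(F 0)` at `z`; if moreover `F 0` has finite rank, the kernel of the extension
at `z` is infinite-dimensional. -/
theorem stmt11 (E : Type*) [NormedAddCommGroup E] [NormedSpace ℂ E] [CompleteSpace E]
    (hE : ¬ FiniteDimensional ℂ E)
    (z : ℂ) (r : ℝ) (hr : 0 < r) (s : ℕ) (hs : 1 ≤ s)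
    (F : ℕ → E →L[ℂ] E) (𝓕 : ℂ → E →L[ℂ] E)
    (hsum : ∀ lam : ℂ, 0 < ‖lam - z‖ → ‖lam - z‖ < r →
      HasSum (fun n : ℕ => ((lam - z) ^ ((n : ℤ) - (s : ℤ))) • F n) (𝓕 lam))
    (hps : ∀ lam : ℂ, ‖lam - z‖ < r →
      Summable (fun n : ℕ => ((lam - z) ^ n) • F n)) :
    ∃ G : ℂ → E →L[ℂ] E,
      AnalyticOnNhd ℂ G (ball z r) ∧
      (∀ lam : ℂ, 0 < ‖lam - z‖ → ‖lam - z‖ < r →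
        G lam = ((lam - z) ^ s) •
          (ContinuousLinearMap.id ℂ E - 𝓕 lam)) ∧
      G z = -(F 0) ∧
      (FiniteDimensional ℂ (LinearMap.range (F 0 : E →ₗ[ℂ] E)) →
        ¬ FiniteDimensional ℂ (LinearMap.ker (G z : E →ₗ[ℂ] E))) := by
  classical
  -- the power series with coefficients `F n`
  set p : FormalMultilinearSeries ℂ ℂ (E →L[ℂ] E) :=
    fun n => ContinuousMultilinearMap.mkPiRing ℂ (Fin n) (F n) with hp
  have hpn : ∀ n (w : ℂ), (p n fun _ => w) = w ^ n • F n := by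
    intro n w
    simp [hp, ContinuousMultilinearMap.mkPiRing_apply]
  have hpnorm : ∀ n, ‖p n‖ = ‖F n‖ := by
    intro n
    simp [hp]
  -- its radius is at least r
  have hrad : (ENNReal.ofReal r) ≤ p.radius := by
    refine ENNReal.le_of_forall_nnreal_lt fun a ha => ?_
    have ha' : (a : ℝ) < r := by
      rw [← ENNReal.ofReal_coe_nnreal, ENNReal.ofReal_lt_ofReal_iff hr] at ha
      exact ha
    have hsum' : Summable (fun n : ℕ => (((a : ℝ) : ℂ)) ^ n • F n) := by
      have := hps (z + (a : ℝ)) (by simpa using ha')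
      simpa using this
    have htend : Filter.Tendsto (fun n => ‖p n‖ * (a : ℝ) ^ n) Filter.atTop (nhds 0) := by
      have h0 := hsum'.tendsto_atTop_zero
      have h1 : Filter.Tendsto (fun n => ‖(((a : ℝ) : ℂ)) ^ n • F n‖) Filter.atTop (nhds 0) := by
        simpa using h0.norm
      refine h1.congr fun n => ?_
      rw [norm_smul ((((a : ℝ) : ℂ)) ^ n) (F n), norm_pow, hpnorm, mul_comm]
      congr 2
      simp [abs_of_nonneg a.2]
    exact p.le_radius_of_tendsto htend
  have hradpos : 0 < p.radius := lt_of_lt_of_le (by simp [hr]) hrad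
  have hball : HasFPowerSeriesOnBall p.sum p 0 p.radius :=
    p.hasFPowerSeriesOnBall hradpos
  -- value of the candidate extension at z
  have hGz : ((z : ℂ) - z) ^ s • (ContinuousLinearMap.id ℂ E) - p.sum (z - z) = -(F 0) := by
    rw [sub_self z]
    rw [zero_pow (by omega : s ≠ 0), zero_smul, zero_sub]
    congr 1
    rw [FormalMultilinearSeries.sum]
    rw [show (fun n : ℕ => p n fun _ => (0 : ℂ)) = fun n : ℕ => (0 : ℂ) ^ n • F n from
      funext fun n => hpn n 0]
    rw [tsum_eq_single 0 (fun n hn => by simp [zero_pow hn])]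
    simp
  -- the candidate extension
  refine ⟨fun lam => (lam - z) ^ s • (ContinuousLinearMap.id ℂ E) - p.sum (lam - z),
    ?_, ?_, ?_, ?_⟩
  · -- analyticity
    intro lam hlam
    have h1 : AnalyticAt ℂ (fun lam : ℂ => (lam - z) ^ s • (ContinuousLinearMap.id ℂ E)) lam :=
      by
      have hf : AnalyticAt ℂ (fun w : ℂ => (w - z) ^ s) lam :=
        (analyticAt_id.sub analyticAt_const).pow s
      exact hf.smul analyticAt_const
    have hmem : lam - z ∈ EMetric.ball (0 : ℂ) p.radius := by
      change edist (lam - z) 0 < p.radius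
      refine lt_of_lt_of_le ?_ hrad
      rw [edist_eq_enorm_sub, sub_zero]
      have hlt : ‖lam - z‖ < r := by simpa [dist_eq_norm] using (mem_ball.mp hlam)
      rw [← ofReal_norm]
      exact (ENNReal.ofReal_lt_ofReal_iff hr).mpr hlt
    have h2 : AnalyticAt ℂ p.sum (lam - z) := hball.analyticOnNhd (lam - z) hmem
    have hf2 : AnalyticAt ℂ (fun w : ℂ => w - z) lam := analyticAt_id.sub analyticAt_const
    have h3 : AnalyticAt ℂ (fun lam : ℂ => p.sum (lam - z)) lam :=
      AnalyticAt.comp (f := fun w => w - z) (x := lam) h2 hf2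
    exact h1.sub h3
  · -- agreement on the punctured ball
    intro lam h0 h1
    show (lam - z) ^ s • (ContinuousLinearMap.id ℂ E) - p.sum (lam - z) = _
    have hx : lam - z ≠ 0 := by
      intro h; rw [h] at h0; simp at h0
    have hsum2 : HasSum (fun n : ℕ => (lam - z) ^ n • F n) ((lam - z) ^ s • 𝓕 lam) := by
      have hc := (hsum lam h0 h1).const_smul ((lam - z) ^ s)
      refine HasSum.congr_fun hc fun n => ?_
      rw [smul_smul]
      congr 1
      rw [← zpow_natCast (lam - z) s, ← zpow_add₀ hx, ← zpow_natCast (lam - z) n]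
      congr 1
      omega
    have hsumval : p.sum (lam - z) = (lam - z) ^ s • 𝓕 lam := by
      rw [FormalMultilinearSeries.sum]
      rw [show (fun n : ℕ => p n fun _ => lam - z) = fun n : ℕ => (lam - z) ^ n • F n from
        funext fun n => hpn n (lam - z)]
      exact hsum2.tsum_eq
    rw [hsumval, smul_sub]
  · -- value at z
    exact hGz
  · -- infinite-dimensional kernel
    intro hrange hker
    simp only at hker
    replace hker : FiniteDimensional ℂ (LinearMap.ker ((-(F 0) : E →L[ℂ] E) : E →ₗ[ℂ] E)) := by
      rw [← hGz]; exact hker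
    -- ker (-(F 0)) = ker (F 0)
    have hkereq : LinearMap.ker ((-(F 0) : E →L[ℂ] E) : E →ₗ[ℂ] E) = LinearMap.ker (F 0 : E →ₗ[ℂ] E) := by
      ext x
      simp [LinearMap.mem_ker, neg_eq_zero]
    rw [hkereq] at hker
    -- E ⧸ ker is finite dimensional
    have hquot : FiniteDimensional ℂ (E ⧸ LinearMap.ker ((F 0 : E →L[ℂ] E) : E →ₗ[ℂ] E)) := by
      have e := ((F 0 : E →L[ℂ] E) : E →ₗ[ℂ] E).quotKerEquivRange
      have : FiniteDimensional ℂ (LinearMap.range ((F 0 : E →L[ℂ] E) : E →ₗ[ℂ] E)) := hrange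
      exact Module.Finite.equiv e.symm
    apply hE
    have h1 : IsNoetherian ℂ (LinearMap.ker ((F 0 : E →L[ℂ] E) : E →ₗ[ℂ] E)) := by
      rw [IsNoetherian.iff_fg]; exact hker
    have h2 : IsNoetherian ℂ (E ⧸ LinearMap.ker ((F 0 : E →L[ℂ] E) : E →ₗ[ℂ] E)) := by
      rw [IsNoetherian.iff_fg]; exact hquot
    have h3 : IsNoetherian ℂ E :=
      (isNoetherian_iff_submodule_quotient
        (LinearMap.ker ((F 0 : E →L[ℂ] E) : E →ₗ[ℂ] E))).mpr ⟨h1, h2⟩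
    exact IsNoetherian.iff_fg.mp h3
end
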